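/- Let α ≠ 0 and β be constants and define u(x, y₁, y₂, t) = α (y₁² + y₂² − 4 x t)/t² + β for t ≠ 0. Then u satisfies the 4-dimensional dKP Einstein–Weyl equation u_{xt} − (u u_x)_x − u_{y₁y₁} − u_{y₂y₂} + u_x² = 0. -/

import Mathlib

/-- `u = α(y₁² + y₂² − 4xt)/t² + β` (`α ≠ 0`) solves the 4-dimensional dKP
Einstein–Weyl equation `u_{xt} − (u u_x)_x − u_{y₁y₁} − u_{y₂y₂} + u_x² = 0`. -/
theorem stmt13 (α β : ℝ) (hα : α ≠ 0)
    (u : ℝ → ℝ → ℝ → ℝ → ℝ)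
    (hu : ∀ x y₁ y₂ t, u x y₁ y₂ t = α * (y₁^2 + y₂^2 - 4*x*t)/t^2 + β) :
    ∀ x y₁ y₂ t : ℝ, t ≠ 0 →
      deriv (fun s => deriv (fun r => u r y₁ y₂ s) x) t
      - deriv (fun r => u r y₁ y₂ t * deriv (fun r' => u r' y₁ y₂ t) r) x
      - deriv (deriv (fun s => u x s y₂ t)) y₁
      - deriv (deriv (fun s => u x y₁ s t)) y₂
      + (deriv (fun r => u r y₁ y₂ t) x)^2 = 0 := by
  intro x y₁ y₂ t ht
  -- x-derivative at every point, for every value of the last variable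
  have key : ∀ (s x' : ℝ), deriv (fun r => u r y₁ y₂ s) x' = -4*α/s := by
    intro s x'
    rcases eq_or_ne s 0 with hs | hs
    · subst hs
      have : (fun r => u r y₁ y₂ 0) = fun _ => β := by
        funext r; simp [hu]
      rw [this]; simp
    · have h1 : HasDerivAt (fun r : ℝ => α * (y₁^2 + y₂^2 - 4*r*s)/s^2 + β)
          (α * (-(4*s))/s^2) x' := by
        have h0 : HasDerivAt (fun r : ℝ => 4*r*s) (4*s) x' := by
          simpa using ((hasDerivAt_id x').const_mul (4:ℝ)).mul_const s
        have h2 := ((hasDerivAt_const x' (y₁^2+y₂^2)).sub h0).const_mul α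
        have h3 := (h2.div_const (s^2)).add_const β
        simpa using h3
      have heq : (fun r => u r y₁ y₂ s) = fun r : ℝ => α * (y₁^2 + y₂^2 - 4*r*s)/s^2 + β := by
        funext r; rw [hu]
      rw [heq, h1.deriv]
      field_simp
  -- term 1 : u_{xt}
  have T1 : deriv (fun s => deriv (fun r => u r y₁ y₂ s) x) t = 4*α/t^2 := by
    have heq : (fun s => deriv (fun r => u r y₁ y₂ s) x) = fun s : ℝ => -4*α * s⁻¹ := by
      funext s; rw [key s x, div_eq_mul_inv]
    rw [heq]
    have := (hasDerivAt_inv ht).const_mul (-4*α)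
    rw [this.deriv]
    field_simp
  -- term 2 : (u u_x)_x
  have T2 : deriv (fun r => u r y₁ y₂ t * deriv (fun r' => u r' y₁ y₂ t) r) x
      = 16*α^2/t^2 := by
    have heq : (fun r => u r y₁ y₂ t * deriv (fun r' => u r' y₁ y₂ t) r)
        = fun r => (α * (y₁^2 + y₂^2 - 4*r*t)/t^2 + β) * (-4*α/t) := by
      funext r; rw [key t r, hu]
    rw [heq]
    have h0 : HasDerivAt (fun r : ℝ => 4*r*t) (4*t) x := by
      simpa using ((hasDerivAt_id x).const_mul (4:ℝ)).mul_const t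
    have h2 := (((((hasDerivAt_const x (y₁^2+y₂^2)).sub h0).const_mul α).div_const
        (t^2)).add_const β).mul_const (-4*α/t)
    have h2' : HasDerivAt (fun r : ℝ => (α * (y₁^2 + y₂^2 - 4*r*t)/t^2 + β) * (-4*α/t))
        (α * (0 - 4 * t) / t ^ 2 * (-4 * α / t)) x := h2
    rw [h2'.deriv]
    field_simp
    ring
  -- term 3 : u_{y₁y₁}
  have T3 : deriv (deriv (fun s => u x s y₂ t)) y₁ = 2*α/t^2 := by
    have key3 : ∀ s : ℝ, deriv (fun s => u x s y₂ t) s = 2*α*s/t^2 := by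
      intro s
      have heq : (fun s => u x s y₂ t) = fun s : ℝ => α * (s^2 + y₂^2 - 4*x*t)/t^2 + β := by
        funext r; rw [hu]
      have h0 : HasDerivAt (fun s : ℝ => s^2 + y₂^2 - 4*x*t) (2*s) s := by
        simpa using (((hasDerivAt_id s).pow 2).add_const (y₂^2)).sub_const (4*x*t)
      have h2 := (((h0.const_mul α).div_const (t^2)).add_const β)
      rw [heq, h2.deriv]; ring
    have heq : deriv (fun s => u x s y₂ t) = fun s : ℝ => 2*α/t^2 * s := by
      funext s; rw [key3 s]; ring
    rw [heq]
    simpa using (((hasDerivAt_id' y₁).const_mul (2*α/t^2)).deriv)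
  -- term 4 : u_{y₂y₂}
  have T4 : deriv (deriv (fun s => u x y₁ s t)) y₂ = 2*α/t^2 := by
    have key4 : ∀ s : ℝ, deriv (fun s => u x y₁ s t) s = 2*α*s/t^2 := by
      intro s
      have heq : (fun s => u x y₁ s t) = fun s : ℝ => α * (y₁^2 + s^2 - 4*x*t)/t^2 + β := by
        funext r; rw [hu]
      have h0 : HasDerivAt (fun s : ℝ => y₁^2 + s^2 - 4*x*t) (2*s) s := by
        simpa using (((hasDerivAt_id s).pow 2).const_add (y₁^2)).sub_const (4*x*t)
      have h2 := (((h0.const_mul α).div_const (t^2)).add_const β)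
      rw [heq, h2.deriv]; ring
    have heq : deriv (fun s => u x y₁ s t) = fun s : ℝ => 2*α/t^2 * s := by
      funext s; rw [key4 s]; ring
    rw [heq]
    simpa using (((hasDerivAt_id' y₂).const_mul (2*α/t^2)).deriv)
  rw [T1, T2, T3, T4, key t x]
  field_simp
  ring
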